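/- Let C be a field, n a positive integer, and h_1, h_2 ∈ GL_n(C) with h_1^t = I_n and h_2^p = I_n for positive integers t, p. Suppose the commutator h_1 h_2 h_1^{-1} h_2^{-1} equals α·I_n for some scalar α ∈ Cˣ. Then α^d = 1, where d = gcd(n, t, p); in particular, if gcd(n, t, p) = 1 then h_1 and h_2 commute. -/

import Mathlib

/-- If `h_1, h_2 ∈ GL_n(C)` satisfy `h_1^t = I`, `h_2^p = I` and their commutator is the
scalar matrix `α·I_n`, then `α^d = 1` where `d = gcd(n, t, p)`; in particular, if
`gcd(n, t, p) = 1` then `h_1` and `h_2` commute. -/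
theorem scalar_commutator_pow_gcd {C : Type*} [Field C] (n t p : ℕ)
    (hn : 0 < n) (ht : 0 < t) (hp : 0 < p)
    (h1 h2 : (Matrix (Fin n) (Fin n) C)ˣ)
    (h1t : h1 ^ t = 1) (h2p : h2 ^ p = 1) (α : Cˣ)
    (hc : ((h1 * h2 * h1⁻¹ * h2⁻¹ : (Matrix (Fin n) (Fin n) C)ˣ) :
        Matrix (Fin n) (Fin n) C) = (α : C) • (1 : Matrix (Fin n) (Fin n) C)) :
    (α : C) ^ (Nat.gcd n (Nat.gcd t p)) = 1 ∧
      (Nat.gcd n (Nat.gcd t p) = 1 → h1 * h2 = h2 * h1) := by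
  have hne : Nonempty (Fin n) := ⟨⟨0, hn⟩⟩
  set M := Matrix (Fin n) (Fin n) C with hM
  -- the scalar units map
  let S : Cˣ →* Mˣ := Units.map (Matrix.scalar (Fin n)).toMonoidHom
  have hscalar : ∀ β : C, Matrix.scalar (Fin n) β = β • (1 : M) := by
    intro β
    rw [Matrix.scalar_apply, Matrix.smul_one_eq_diagonal]
  have hSval : ∀ β : Cˣ, ((S β : Mˣ) : M) = (β : C) • (1 : M) := by
    intro β
    simp [S, hscalar]
  -- scalar units are central
  have hcen : ∀ (β : Cˣ) (u : Mˣ), S β * u = u * S β := by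
    intro β u
    have h := (Matrix.scalar_commute (β : C) (fun r => mul_comm _ _) (u : M)).eq
    exact Units.ext (by simpa [S, Units.val_mul] using h)
  -- commutator equation in the unit group
  have hc' : h1 * h2 * h1⁻¹ * h2⁻¹ = S α := by
    ext
    rw [hc, hSval]
  have key : h1 * h2 * h1⁻¹ = S α * h2 := by
    have := congrArg (· * h2) hc'
    simpa [mul_assoc] using this
  have unit_of_S : ∀ β : Cˣ, S β = 1 → β = 1 := by
    intro β hβ
    have hv : (Matrix.scalar (Fin n)) (β : C) = 1 := by
      have := congrArg Units.val hβ
      simp [S] at this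
      exact this
    rw [← map_one (Matrix.scalar (Fin n))] at hv
    exact Units.ext (Matrix.scalar_inj.mp hv)
  -- α ^ p = 1
  have hαp : α ^ p = 1 := by
    have e1 : (h1 * h2 * h1⁻¹) ^ p = h1 * h2 ^ p * h1⁻¹ := conj_pow
    have e2 : (S α * h2) ^ p = S α ^ p * h2 ^ p := Commute.mul_pow (hcen α h2) p
    refine unit_of_S _ ?_
    rw [map_pow]
    have := e1.symm.trans (by rw [key, e2])
    rw [h2p, mul_one, mul_inv_cancel, mul_one] at this
    exact this.symm
  -- α ^ t = 1
  have hαt : α ^ t = 1 := by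
    have key2 : h2 * h1 * h2⁻¹ = S α⁻¹ * h1 := by
      have e : h1 * h2 = S α * (h2 * h1) := by
        have := congrArg (· * (h2 * h1)) hc'
        simpa [mul_assoc] using this
      have : h2 * h1 = S α⁻¹ * (h1 * h2) := by
        rw [e, ← mul_assoc, ← map_mul, inv_mul_cancel, map_one, one_mul]
      rw [this, mul_assoc, mul_assoc, mul_inv_cancel, mul_one]
    have e1 : (h2 * h1 * h2⁻¹) ^ t = h2 * h1 ^ t * h2⁻¹ := conj_pow
    have e2 : (S α⁻¹ * h1) ^ t = S α⁻¹ ^ t * h1 ^ t := Commute.mul_pow (hcen α⁻¹ h1) t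
    have hinv : α⁻¹ ^ t = 1 := by
      refine unit_of_S _ ?_
      rw [map_pow]
      have := e1.symm.trans (by rw [key2, e2])
      rw [h1t, mul_one, mul_inv_cancel, mul_one] at this
      exact this.symm
    have := congrArg (·⁻¹) hinv
    simpa using this
  -- α ^ n = 1 via determinant
  have hαn : α ^ n = 1 := by
    let D : Mˣ →* Cˣ := Units.map Matrix.detMonoidHom
    have hd := congrArg D hc'
    have lhs : D (h1 * h2 * h1⁻¹ * h2⁻¹) = 1 := by
      simp only [map_mul, map_inv]
      rw [mul_comm (D h1) (D h2)]
      simp [mul_assoc]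
    have rhs : D (S α) = α ^ n := by
      ext
      have : ((D (S α) : Cˣ) : C) = Matrix.det ((S α : Mˣ) : M) := rfl
      rw [this, hSval, Matrix.det_smul, Matrix.det_one]
      simp
    rw [lhs, rhs] at hd
    exact hd.symm
  -- conclude
  have hdvd : orderOf α ∣ Nat.gcd n (Nat.gcd t p) :=
    Nat.dvd_gcd (orderOf_dvd_of_pow_eq_one hαn)
      (Nat.dvd_gcd (orderOf_dvd_of_pow_eq_one hαt) (orderOf_dvd_of_pow_eq_one hαp))
  have hg : α ^ Nat.gcd n (Nat.gcd t p) = 1 := orderOf_dvd_iff_pow_eq_one.mp hdvd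
  constructor
  · have := congrArg (Units.val) hg
    simpa [Units.val_pow_eq_pow_val] using this
  · intro h1gcd
    have hα1 : α = 1 := by rw [h1gcd, pow_one] at hg; exact hg
    have h1' : h1 * h2 * h1⁻¹ * h2⁻¹ = 1 := by rw [hc', hα1, map_one]
    have := congrArg (· * (h2 * h1)) h1'
    simpa [mul_assoc] using this
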